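/- Let X be a Banach space, p ∈ [1, ∞), Λ an arbitrary index set, and let {T_λ : λ ∈ Λ} ⊆ B(X) be a family of bounded linear operators that is R-bounded with R_p-bound ρ := R_p({T_λ : λ ∈ Λ}) < 1. Then for every λ ∈ Λ the operator I − T_λ is invertible in B(X) (with inverse given by the Neumann series Σ_{ν=0}^∞ T_λ^ν), and the family of inverses {(I − T_λ)^{−1} : λ ∈ Λ} is R-bounded with R_p-bound at most 1/(1 − ρ). -/

import Mathlib

open scoped BigOperators

noncomputable section

/-- The discrete Rademacher average `(2^{-N} ∑_{ε ∈ {−1,1}^N} ‖∑_ν ε_ν v_ν‖^p)^{1/p}`. -/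
def radAvg {Y : Type*} [NormedAddCommGroup Y] (p : ℝ) {N : ℕ} (v : Fin N → Y) : ℝ :=
  (((2 : ℝ) ^ N)⁻¹ * ∑ ε : Fin N → Bool, ‖∑ ν, (if ε ν then v ν else -v ν)‖ ^ p) ^ p⁻¹

/-- A family `T` of bounded operators is R-bounded with `R_p`-bound at most `C`. -/
def IsRBoundedWith {X Y : Type*} [NormedAddCommGroup X] [NormedSpace ℂ X]
    [NormedAddCommGroup Y] [NormedSpace ℂ Y]
    (p : ℝ) (T : Set (X →L[ℂ] Y)) (C : ℝ) : Prop :=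
  ∀ (N : ℕ) (t : Fin N → X →L[ℂ] Y), (∀ ν, t ν ∈ T) → ∀ x : Fin N → X,
    radAvg p (fun ν => t ν (x ν)) ≤ C * radAvg p x

/-- A family of bounded operators is R-bounded. -/
def IsRBounded {X Y : Type*} [NormedAddCommGroup X] [NormedSpace ℂ X]
    [NormedAddCommGroup Y] [NormedSpace ℂ Y] (p : ℝ) (T : Set (X →L[ℂ] Y)) : Prop :=
  ∃ C, 0 ≤ C ∧ IsRBoundedWith p T C

/-- The `R_p`-bound of a family of bounded operators. -/
def rBound {X Y : Type*} [NormedAddCommGroup X] [NormedSpace ℂ X]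
    [NormedAddCommGroup Y] [NormedSpace ℂ Y] (p : ℝ) (T : Set (X →L[ℂ] Y)) : ℝ :=
  sInf {C | 0 ≤ C ∧ IsRBoundedWith p T C}

section helpers
variable {Y : Type*} [NormedAddCommGroup Y] {p : ℝ} {N : ℕ}

lemma radAvg_nonneg (p : ℝ) (v : Fin N → Y) : 0 ≤ radAvg p v := by
  apply Real.rpow_nonneg; positivity

lemma radAvg_eq (v : Fin N → Y) :
    radAvg p v = (((2:ℝ)^N)⁻¹)^p⁻¹ *
      (∑ ε : Fin N → Bool, ‖∑ ν, (if ε ν then v ν else -v ν)‖ ^ p) ^ p⁻¹ := by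
  rw [radAvg, Real.mul_rpow (by positivity) (by positivity)]

lemma radAvg_single (hp : 0 < p) (y : Y) : radAvg p (fun _ : Fin 1 => y) = ‖y‖ := by
  have : ∑ ε : Fin 1 → Bool, ‖∑ ν : Fin 1, (if ε ν then y else -y)‖ ^ p = 2 * ‖y‖ ^ p := by
    rw [Fintype.sum_equiv (Equiv.funUnique (Fin 1) Bool)
      (fun ε : Fin 1 → Bool => ‖∑ ν : Fin 1, (if ε ν then y else -y)‖ ^ p)
      (fun b : Bool => ‖if b then y else -y‖ ^ p)
      (fun ε => by simp [Fin.sum_univ_one])]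
    simp [Fintype.sum_bool]; ring
  rw [radAvg, this]
  rw [pow_one, show ((2:ℝ))⁻¹ * (2 * ‖y‖^p) = ‖y‖^p by ring,
    Real.rpow_rpow_inv (norm_nonneg y) hp.ne']

lemma radAvg_add_le (hp : 1 ≤ p) (v w : Fin N → Y) :
    radAvg p (fun ν => v ν + w ν) ≤ radAvg p v + radAvg p w := by
  have hp0 : 0 < p := lt_of_lt_of_le one_pos hp
  rw [radAvg_eq, radAvg_eq, radAvg_eq, ← mul_add]
  apply mul_le_mul_of_nonneg_left _ (by positivity)
  set f : (Fin N → Bool) → ℝ := fun ε => ‖∑ ν, (if ε ν then v ν else -v ν)‖ with hf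
  set g : (Fin N → Bool) → ℝ := fun ε => ‖∑ ν, (if ε ν then w ν else -w ν)‖ with hg
  have key : ∀ ε : Fin N → Bool,
      ‖∑ ν, (if ε ν then v ν + w ν else -(v ν + w ν))‖ ≤ f ε + g ε := by
    intro ε
    have : (∑ ν, (if ε ν then v ν + w ν else -(v ν + w ν))) =
        (∑ ν, (if ε ν then v ν else -v ν)) + ∑ ν, (if ε ν then w ν else -w ν) := by
      rw [← Finset.sum_add_distrib]
      refine Finset.sum_congr rfl fun ν _ => ?_
      split_ifs <;> simp [neg_add] <;> abel
    rw [this]; exact norm_add_le _ _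
  calc (∑ ε : Fin N → Bool, ‖∑ ν, (if ε ν then v ν + w ν else -(v ν + w ν))‖ ^ p) ^ p⁻¹
      ≤ (∑ ε : Fin N → Bool, |f ε + g ε| ^ p) ^ p⁻¹ := by
        apply Real.rpow_le_rpow (by positivity) _ (by positivity)
        refine Finset.sum_le_sum fun ε _ => ?_
        apply Real.rpow_le_rpow (norm_nonneg _) _ hp0.le
        exact (key ε).trans (le_abs_self _)
    _ ≤ (∑ ε : Fin N → Bool, |f ε| ^ p) ^ (1/p) + (∑ ε : Fin N → Bool, |g ε| ^ p) ^ (1/p) := by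
        rw [show p⁻¹ = 1/p by rw [one_div]]
        exact Real.Lp_add_le _ _ _ hp
    _ = (∑ ε : Fin N → Bool, f ε ^ p) ^ p⁻¹ + (∑ ε : Fin N → Bool, g ε ^ p) ^ p⁻¹ := by
        rw [one_div]
        congr 2 <;> refine Finset.sum_congr rfl fun ε _ => ?_ <;>
          rw [abs_of_nonneg (norm_nonneg _)]

lemma radAvg_zero (hp : 0 < p) : radAvg p (fun _ : Fin N => (0:Y)) = 0 := by
  rw [radAvg]
  simp [Real.zero_rpow hp.ne', Real.zero_rpow (inv_ne_zero hp.ne')]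

lemma radAvg_sum_le (hp : 1 ≤ p) {ι : Type*} (s : Finset ι) (v : ι → Fin N → Y) :
    radAvg p (fun ν => ∑ k ∈ s, v k ν) ≤ ∑ k ∈ s, radAvg p (v k) := by
  classical
  induction s using Finset.induction_on with
  | empty => simp [radAvg_zero (lt_of_lt_of_le one_pos hp)]
  | insert a s' hk ih =>
    simp only [Finset.sum_insert hk]
    exact (radAvg_add_le hp _ _).trans (by gcongr)

lemma radAvg_le_sum_norm (hp : 1 ≤ p) (v : Fin N → Y) : radAvg p v ≤ ∑ ν, ‖v ν‖ := by
  have hp0 : 0 < p := lt_of_lt_of_le one_pos hp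
  have hM : ∀ ε : Fin N → Bool, ‖∑ ν, (if ε ν then v ν else -v ν)‖ ≤ ∑ ν, ‖v ν‖ := by
    intro ε
    refine (norm_sum_le _ _).trans (Finset.sum_le_sum fun ν _ => ?_)
    split_ifs <;> simp
  have hMn : (0:ℝ) ≤ ∑ ν, ‖v ν‖ := Finset.sum_nonneg fun ν _ => norm_nonneg _
  rw [radAvg]
  have : ((2:ℝ)^N)⁻¹ * ∑ ε : Fin N → Bool, ‖∑ ν, (if ε ν then v ν else -v ν)‖ ^ p
      ≤ (∑ ν, ‖v ν‖) ^ p := by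
    have h2 : ∑ ε : Fin N → Bool, ‖∑ ν, (if ε ν then v ν else -v ν)‖ ^ p
        ≤ (2:ℝ)^N * (∑ ν, ‖v ν‖) ^ p := by
      calc _ ≤ ∑ _ε : Fin N → Bool, (∑ ν, ‖v ν‖) ^ p :=
            Finset.sum_le_sum fun ε _ => Real.rpow_le_rpow (norm_nonneg _) (hM ε) hp0.le
        _ = (2:ℝ)^N * (∑ ν, ‖v ν‖) ^ p := by
            rw [Finset.sum_const, Finset.card_univ, Fintype.card_fun]
            simp [mul_comm]
    calc ((2:ℝ)^N)⁻¹ * ∑ ε : Fin N → Bool, ‖∑ ν, (if ε ν then v ν else -v ν)‖ ^ p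
        ≤ ((2:ℝ)^N)⁻¹ * ((2:ℝ)^N * (∑ ν, ‖v ν‖) ^ p) :=
          mul_le_mul_of_nonneg_left h2 (by positivity)
      _ = (∑ ν, ‖v ν‖) ^ p := by field_simp
  calc _ ≤ ((∑ ν, ‖v ν‖) ^ p) ^ p⁻¹ := Real.rpow_le_rpow (by positivity) this (by positivity)
    _ = _ := Real.rpow_rpow_inv hMn hp0.ne'
end helpers

/-- If `{T_λ : λ ∈ Λ}` is R-bounded with `R_p`-bound `ρ < 1`, then every
`I − T_λ` is invertible, with inverse given by the Neumann series `∑ T_λ^ν`, and the family of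
inverses is R-bounded with `R_p`-bound at most `1/(1−ρ)`. -/
theorem stmt1 {X : Type*} [NormedAddCommGroup X] [NormedSpace ℂ X] [CompleteSpace X]
    (p : ℝ) (hp : 1 ≤ p) {Λ : Type*} (T : Λ → X →L[ℂ] X)
    (hRB : IsRBounded p (Set.range T))
    (hρ : rBound p (Set.range T) < 1) :
    (∀ l : Λ, IsUnit (1 - T l)) ∧
      (∀ l : Λ, Ring.inverse (1 - T l) = ∑' ν : ℕ, T l ^ ν) ∧
      IsRBoundedWith p {S | ∃ l : Λ, S = Ring.inverse (1 - T l)}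
        (1 / (1 - rBound p (Set.range T))) := by
  have hp0 : 0 < p := lt_of_lt_of_le one_pos hp
  set ρ := rBound p (Set.range T) with hρdef
  obtain ⟨C0, hC00, hC0⟩ := hRB
  have hSne : {C | 0 ≤ C ∧ IsRBoundedWith p (Set.range T) C}.Nonempty := ⟨C0, hC00, hC0⟩
  have hρ0 : 0 ≤ ρ := le_csInf hSne fun C hC => hC.1
  have hρRW : IsRBoundedWith p (Set.range T) ρ := by
    intro N t ht x
    rcases eq_or_lt_of_le (radAvg_nonneg p x) with hb | hb
    · have h := hC0 N t ht x
      rw [← hb] at h ⊢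
      simpa using h
    · have hdiv : radAvg p (fun ν => t ν (x ν)) / radAvg p x ≤ ρ := by
        apply le_csInf hSne
        intro C hC
        rw [div_le_iff₀ hb]
        exact hC.2 N t ht x
      calc radAvg p (fun ν => t ν (x ν))
          = radAvg p (fun ν => t ν (x ν)) / radAvg p x * radAvg p x :=
            (div_mul_cancel₀ _ hb.ne').symm
        _ ≤ ρ * radAvg p x := mul_le_mul_of_nonneg_right hdiv hb.le
  have hTlt : ∀ l, ‖T l‖ < 1 := by
    intro l
    refine lt_of_le_of_lt ?_ hρ
    apply ContinuousLinearMap.opNorm_le_bound _ hρ0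
    intro x
    have h := hρRW 1 (fun _ => T l) (fun _ => ⟨l, rfl⟩) (fun _ => x)
    simpa only [radAvg_single hp0] using h
  have hUnit : ∀ l, IsUnit (1 - T l) := fun l => isUnit_one_sub_of_norm_lt_one (hTlt l)
  have hInv : ∀ l, Ring.inverse (1 - T l) = ∑' ν : ℕ, T l ^ ν :=
    fun l => (geom_series_eq_inverse _ (hTlt l)).symm
  refine ⟨hUnit, hInv, ?_⟩
  have hpow : ∀ (k N : ℕ) (l : Fin N → Λ) (x : Fin N → X),
      radAvg p (fun ν => (T (l ν) ^ k) (x ν)) ≤ ρ ^ k * radAvg p x := by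
    intro k
    induction k with
    | zero => intro N l x; simp [pow_zero]
    | succ k ih =>
      intro N l x
      have h1 : (fun ν => (T (l ν) ^ (k+1)) (x ν))
          = fun ν => T (l ν) ((T (l ν) ^ k) (x ν)) := by
        funext ν; rw [pow_succ']; rfl
      rw [h1]
      calc _ ≤ ρ * radAvg p (fun ν => (T (l ν) ^ k) (x ν)) :=
            hρRW N (fun ν => T (l ν)) (fun ν => ⟨l ν, rfl⟩) _
        _ ≤ ρ * (ρ ^ k * radAvg p x) := mul_le_mul_of_nonneg_left (ih N l x) hρ0
        _ = ρ ^ (k+1) * radAvg p x := by ring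
  intro N t ht x
  choose l hlspec using ht
  have hsum : ∀ ν, HasSum (fun k => (T (l ν) ^ k) (x ν)) (t ν (x ν)) := by
    intro ν
    have h1 : HasSum (fun k : ℕ => T (l ν) ^ k) (Ring.inverse (1 - T (l ν))) :=
      hasSum_geom_series_inverse _ (hTlt _)
    have h2 := (ContinuousLinearMap.apply ℂ X (x ν)).hasSum h1
    simpa [hlspec ν] using h2
  set b := radAvg p x with hb
  have hb0 : 0 ≤ b := radAvg_nonneg p x
  have hgeo : ∀ M : ℕ, ∑ k ∈ Finset.range M, ρ ^ k ≤ (1 - ρ)⁻¹ := by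
    intro M
    calc ∑ k ∈ Finset.range M, ρ ^ k ≤ ∑' k : ℕ, ρ ^ k :=
          Summable.sum_le_tsum _ (fun k _ => pow_nonneg hρ0 k) (summable_geometric_of_lt_one hρ0 hρ)
      _ = (1 - ρ)⁻¹ := tsum_geometric_of_lt_one hρ0 hρ
  have hpartial : ∀ M : ℕ,
      radAvg p (fun ν => ∑ k ∈ Finset.range M, (T (l ν) ^ k) (x ν)) ≤ (1-ρ)⁻¹ * b := by
    intro M
    calc _ ≤ ∑ k ∈ Finset.range M, radAvg p (fun ν => (T (l ν) ^ k) (x ν)) :=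
          radAvg_sum_le hp _ _
      _ ≤ ∑ k ∈ Finset.range M, ρ ^ k * b :=
          Finset.sum_le_sum fun k _ => hpow k N l x
      _ = (∑ k ∈ Finset.range M, ρ ^ k) * b := by rw [Finset.sum_mul]
      _ ≤ (1-ρ)⁻¹ * b := mul_le_mul_of_nonneg_right (hgeo M) hb0
  have hbound : ∀ M : ℕ, radAvg p (fun ν => t ν (x ν)) ≤
      (∑ ν, ‖t ν (x ν) - ∑ k ∈ Finset.range M, (T (l ν) ^ k) (x ν)‖) + (1-ρ)⁻¹ * b := by
    intro M
    have h3 := radAvg_add_le hp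
      (fun ν => t ν (x ν) - ∑ k ∈ Finset.range M, (T (l ν) ^ k) (x ν))
      (fun ν => ∑ k ∈ Finset.range M, (T (l ν) ^ k) (x ν))
    simp only [sub_add_cancel] at h3
    exact h3.trans (add_le_add (radAvg_le_sum_norm hp _) (hpartial M))
  have htend : Filter.Tendsto (fun M : ℕ =>
      (∑ ν, ‖t ν (x ν) - ∑ k ∈ Finset.range M, (T (l ν) ^ k) (x ν)‖) + (1-ρ)⁻¹ * b)
      Filter.atTop (nhds (0 + (1-ρ)⁻¹ * b)) := by
    apply Filter.Tendsto.add _ tendsto_const_nhds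
    have hnu : ∀ ν : Fin N, Filter.Tendsto
        (fun M : ℕ => ‖t ν (x ν) - ∑ k ∈ Finset.range M, (T (l ν) ^ k) (x ν)‖)
        Filter.atTop (nhds 0) := by
      intro ν
      have h := (hsum ν).tendsto_sum_nat
      have h2 : Filter.Tendsto
          (fun M : ℕ => t ν (x ν) - ∑ k ∈ Finset.range M, (T (l ν) ^ k) (x ν))
          Filter.atTop (nhds 0) := by
        have hc : Filter.Tendsto (fun _ : ℕ => t ν (x ν)) Filter.atTop (nhds (t ν (x ν))) :=
          tendsto_const_nhds
        simpa using hc.sub h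
      simpa using h2.norm
    have := tendsto_finset_sum (Finset.univ : Finset (Fin N)) (fun ν _ => hnu ν)
    simpa using this
  have hfinal := ge_of_tendsto' htend hbound
  rw [zero_add] at hfinal
  calc radAvg p (fun ν => t ν (x ν)) ≤ (1-ρ)⁻¹ * b := hfinal
    _ = 1 / (1 - ρ) * b := by rw [one_div]

end
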